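/- Let W be a symmetric 3×3×3 real tensor, x a nonzero real number, and T the tensor obtained by applying the Givens rotation G^{(1,3)}(arctan x) to each mode of W. If W₂₂₃ = 0 and T₂₂₃ = 0, then W₁₂₂ = 0; more precisely, T₂₂₃ = -(x/√(1+x²)) W₁₂₂ + (1/√(1+x²)) W₂₂₃. -/
import Mathlib

open Real

theorem stmt_9 (W : Fin 3 → Fin 3 → Fin 3 → ℝ)
    (hsymm : ∀ a b c, W a b c = W b a c ∧ W a b c = W a c b)
    (x : ℝ) (hx : x ≠ 0)
    (G : Matrix (Fin 3) (Fin 3) ℝ)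
    (hG : G = !![cos (arctan x), 0, -sin (arctan x); 0, 1, 0;
                 sin (arctan x), 0, cos (arctan x)])
    (T : Fin 3 → Fin 3 → Fin 3 → ℝ)
    (hT : ∀ i j k, T i j k = ∑ a : Fin 3, ∑ b : Fin 3, ∑ c : Fin 3,
        W a b c * G a i * G b j * G c k) :
    T 1 1 2 = -(x / Real.sqrt (1 + x^2)) * W 0 1 1 + (1 / Real.sqrt (1 + x^2)) * W 1 1 2
    ∧ (W 1 1 2 = 0 → T 1 1 2 = 0 → W 0 1 1 = 0) := by
  have h110 : W 1 1 0 = W 0 1 1 := by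
    rw [(hsymm 1 1 0).2, (hsymm 1 0 1).1]
  have key : T 1 1 2 = -(x / Real.sqrt (1 + x^2)) * W 0 1 1
      + (1 / Real.sqrt (1 + x^2)) * W 1 1 2 := by
    rw [hT, hG]
    simp [Fin.sum_univ_three, h110, Real.cos_arctan, Real.sin_arctan]
    ring
  refine ⟨key, fun h1 h2 => ?_⟩
  rw [key, h1] at h2
  have hs : Real.sqrt (1 + x^2) > 0 := Real.sqrt_pos.2 (by positivity)
  have : x / Real.sqrt (1 + x^2) ≠ 0 := div_ne_zero hx hs.ne'
  simpa [this] using h2
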